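/- arXiv:1901.09574 — 5 statements merged into one kernel-verified Lean document; each statement's English description precedes it below -/
import Mathlib

section
/- Fix r ∈ ℚ^n and let M_r = {(v,i) ∈ ℚ × ℕ^n : v ≥ 0 and v + r·i ∈ ℤ}, an additive submonoid of ℚ × ℕ^n. Let I ⊆ M_r be an ideal of the monoid M_r, i.e., I + M_r ⊆ I. Then there exists a unique subset S ⊆ I such that (1) I = S + M_r, and (2) every subset T ⊆ I with I = T + M_r contains S. Moreover, S is finite; it is the set of minimal elements of I for the order x ≤ y iff y − x ∈ M_r. -/
/-- The monoid `M_r = {(v, i) ∈ ℚ × ℕ^n : v ≥ 0 and v + r·i ∈ ℤ}`. -/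
def Mr {n : ℕ} (r : Fin n → ℚ) : Set (ℚ × (Fin n → ℕ)) :=
  {p | 0 ≤ p.1 ∧ ∃ m : ℤ, p.1 + ∑ j, r j * (p.2 j : ℚ) = (m : ℚ)}

section Aux

variable {n : ℕ} (r : Fin n → ℚ)

/-- common denominator -/
private def Qd : ℕ := ∏ j, (r j).den

private lemma Qd_pos : 0 < Qd r :=
  Finset.prod_pos fun j _ => (r j).pos

private lemma Qd_mul_int (j : Fin n) : ∃ z : ℤ, ((Qd r : ℕ) : ℚ) * r j = (z : ℚ) := by
  have hdvd : (r j).den ∣ Qd r := Finset.dvd_prod_of_mem _ (Finset.mem_univ j)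
  obtain ⟨k, hk⟩ := hdvd
  refine ⟨k * (r j).num, ?_⟩
  have key : ((r j).den : ℚ) * r j = ((r j).num : ℚ) := by
    rw [mul_comm, Rat.mul_den_eq_num]
  rw [hk]
  push_cast
  rw [mul_comm ((r j).den : ℚ) (k : ℚ), mul_assoc, key]

private lemma Qd_dot_int (i : Fin n → ℕ) :
    ∃ z : ℤ, ((Qd r : ℕ) : ℚ) * ∑ j, r j * (i j : ℚ) = (z : ℚ) := by
  choose z hz using Qd_mul_int r
  refine ⟨∑ j, z j * i j, ?_⟩
  rw [Finset.mul_sum]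
  push_cast
  refine Finset.sum_congr rfl fun j _ => ?_
  rw [← mul_assoc, hz j]

private lemma Mr_fst_int {x : ℚ × (Fin n → ℕ)} (hx : x ∈ Mr r) :
    ∃ z : ℤ, ((Qd r : ℕ) : ℚ) * x.1 = (z : ℚ) ∧ 0 ≤ z := by
  obtain ⟨hx0, m, hm⟩ := hx
  obtain ⟨z, hz⟩ := Qd_dot_int r x.2
  have hmain : ((Qd r : ℕ) : ℚ) * x.1 = (((Qd r : ℤ) * m - z : ℤ) : ℚ) := by
    push_cast
    rw [← hz]
    have : x.1 = (m : ℚ) - ∑ j, r j * (x.2 j : ℚ) := by linarith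
    rw [this]; ring
  refine ⟨(Qd r : ℤ) * m - z, hmain, ?_⟩
  have hQ : (0:ℚ) ≤ ((Qd r : ℕ) : ℚ) := by positivity
  have h1 : (0:ℚ) ≤ ((Qd r : ℕ) : ℚ) * x.1 := mul_nonneg hQ hx0
  rw [hmain] at h1
  exact_mod_cast h1

/-- the measure -/
private def mu (x : ℚ × (Fin n → ℕ)) : ℚ :=
  ((Qd r : ℕ) : ℚ) * x.1 + ∑ j, (x.2 j : ℚ)

private lemma mu_nonneg {x : ℚ × (Fin n → ℕ)} (hx : x ∈ Mr r) : 0 ≤ mu r x := by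
  have h1 : (0:ℚ) ≤ ((Qd r : ℕ) : ℚ) * x.1 :=
    mul_nonneg (by positivity) hx.1
  have h2 : (0:ℚ) ≤ ∑ j, ((x.2 j : ℚ)) := Finset.sum_nonneg fun j _ => by positivity
  unfold mu; linarith

private lemma mu_nat {x : ℚ × (Fin n → ℕ)} (hx : x ∈ Mr r) : ∃ N : ℕ, mu r x = N := by
  obtain ⟨z, hz, hz0⟩ := Mr_fst_int r hx
  refine ⟨z.toNat + ∑ j, x.2 j, ?_⟩
  unfold mu
  rw [hz]
  have hcast : ((z.toNat : ℕ) : ℚ) = (z : ℚ) := by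
    exact_mod_cast congrArg (fun t : ℤ => (t : ℚ)) (Int.toNat_of_nonneg hz0)
  push_cast
  rw [hcast]

private lemma mu_one_le {x : ℚ × (Fin n → ℕ)} (hx : x ∈ Mr r) (hx0 : x ≠ 0) :
    1 ≤ mu r x := by
  obtain ⟨N, hN⟩ := mu_nat r hx
  have hpos : 0 < mu r x := by
    rcases eq_or_lt_of_le hx.1 with h1 | h1
    · have h2 : x.2 ≠ 0 := by
        intro h
        exact hx0 (Prod.ext h1.symm h)
      have : ∃ j, x.2 j ≠ 0 := by
        by_contra hc
        push_neg at hc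
        exact h2 (funext hc)
      obtain ⟨j, hj⟩ := this
      have h3 : (1:ℚ) ≤ ∑ j, (x.2 j : ℚ) := by
        have : (1:ℚ) ≤ (x.2 j : ℚ) := by exact_mod_cast Nat.one_le_iff_ne_zero.2 hj
        calc (1:ℚ) ≤ (x.2 j : ℚ) := this
          _ ≤ ∑ j, (x.2 j : ℚ) :=
            Finset.single_le_sum (f := fun j => ((x.2 j : ℚ)))
              (fun j _ => by positivity) (Finset.mem_univ j)
      have h4 : (0:ℚ) ≤ ((Qd r : ℕ) : ℚ) * x.1 := mul_nonneg (by positivity) hx.1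
      unfold mu; linarith
    · have hQ : (0:ℚ) < ((Qd r : ℕ) : ℚ) := by exact_mod_cast Qd_pos r
      have h4 : (0:ℚ) < ((Qd r : ℕ) : ℚ) * x.1 := mul_pos hQ h1
      have h2 : (0:ℚ) ≤ ∑ j, ((x.2 j : ℚ)) := Finset.sum_nonneg fun j _ => by positivity
      unfold mu; linarith
  rw [hN] at hpos ⊢
  exact_mod_cast hpos

private lemma mu_add (x y : ℚ × (Fin n → ℕ)) : mu r (x + y) = mu r x + mu r y := by
  unfold mu
  simp only [Prod.fst_add, Prod.snd_add, Pi.add_apply]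
  push_cast
  rw [Finset.sum_add_distrib]
  ring

private lemma zero_mem_Mr : (0 : ℚ × (Fin n → ℕ)) ∈ Mr r := by
  refine ⟨le_refl 0, 0, ?_⟩
  simp [Mr]

private lemma add_mem_Mr {x y : ℚ × (Fin n → ℕ)} (hx : x ∈ Mr r) (hy : y ∈ Mr r) :
    x + y ∈ Mr r := by
  obtain ⟨hx0, mx, hmx⟩ := hx
  obtain ⟨hy0, my, hmy⟩ := hy
  refine ⟨add_nonneg hx0 hy0, mx + my, ?_⟩
  simp only [Prod.fst_add, Prod.snd_add, Pi.add_apply]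
  push_cast
  have : ∑ j, r j * ((x.2 j : ℚ) + (y.2 j : ℚ)) =
      ∑ j, r j * (x.2 j : ℚ) + ∑ j, r j * (y.2 j : ℚ) := by
    rw [← Finset.sum_add_distrib]
    exact Finset.sum_congr rfl fun j _ => by ring
  rw [this]
  linarith

private lemma diff_mem_Mr {x y : ℚ × (Fin n → ℕ)} (hx : x ∈ Mr r) (hy : y ∈ Mr r)
    (h1 : x.1 ≤ y.1) (h2 : ∀ j, x.2 j ≤ y.2 j) : ∃ t ∈ Mr r, y = x + t := by
  obtain ⟨hx0, mx, hmx⟩ := hx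
  obtain ⟨hy0, my, hmy⟩ := hy
  refine ⟨(y.1 - x.1, fun j => y.2 j - x.2 j), ⟨by simpa using h1, my - mx, ?_⟩, ?_⟩
  · show y.1 - x.1 + ∑ j, r j * ((y.2 j - x.2 j : ℕ) : ℚ) = ((my - mx : ℤ) : ℚ)
    have hc : ∀ j, ((y.2 j - x.2 j : ℕ) : ℚ) = (y.2 j : ℚ) - (x.2 j : ℚ) := fun j => by
      push_cast [Nat.cast_sub (h2 j)]; ring
    have : ∑ j, r j * ((y.2 j - x.2 j : ℕ) : ℚ)
        = ∑ j, r j * (y.2 j : ℚ) - ∑ j, r j * (x.2 j : ℚ) := by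
      rw [← Finset.sum_sub_distrib]
      exact Finset.sum_congr rfl fun j _ => by rw [hc j]; ring
    rw [this]
    push_cast
    linarith
  · refine Prod.ext ?_ ?_
    · show y.1 = x.1 + (y.1 - x.1); ring
    · funext j
      show y.2 j = x.2 j + (y.2 j - x.2 j)
      have := h2 j
      omega

end Aux

/-- every ideal `I` of the monoid `M_r` has a unique minimal generating
set `S`; moreover `S` is finite and is the set of minimal elements of `I` for the
order `x ≤ y iff y - x ∈ M_r`. -/
theorem statement3 {n : ℕ} (r : Fin n → ℚ) (I : Set (ℚ × (Fin n → ℕ)))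
    (hIM : I ⊆ Mr r) (hI : ∀ x ∈ I, ∀ a ∈ Mr r, x + a ∈ I) :
    ∃ S : Set (ℚ × (Fin n → ℕ)),
      (S ⊆ I ∧ (∀ x, x ∈ I ↔ ∃ s ∈ S, ∃ t ∈ Mr r, x = s + t) ∧
        (∀ T ⊆ I, (∀ x, x ∈ I ↔ ∃ s ∈ T, ∃ t ∈ Mr r, x = s + t) → S ⊆ T)) ∧
      (∀ S' : Set (ℚ × (Fin n → ℕ)),
        (S' ⊆ I ∧ (∀ x, x ∈ I ↔ ∃ s ∈ S', ∃ t ∈ Mr r, x = s + t) ∧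
          (∀ T ⊆ I, (∀ x, x ∈ I ↔ ∃ s ∈ T, ∃ t ∈ Mr r, x = s + t) → S' ⊆ T)) →
        S' = S) ∧
      S.Finite ∧
      S = {x | x ∈ I ∧ ∀ y ∈ I, (∃ t ∈ Mr r, x = y + t) → x = y} := by
  classical
  set S : Set (ℚ × (Fin n → ℕ)) :=
    {x | x ∈ I ∧ ∀ y ∈ I, (∃ t ∈ Mr r, x = y + t) → x = y} with hS
  have hSI : S ⊆ I := fun x hx => hx.1
  -- generation
  have gen : ∀ N : ℕ, ∀ x, x ∈ I → mu r x ≤ N → ∃ s ∈ S, ∃ t ∈ Mr r, x = s + t := by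
    intro N
    induction N with
    | zero =>
      intro x hx hμ
      by_cases hxS : x ∈ S
      · exact ⟨x, hxS, 0, zero_mem_Mr r, (add_zero x).symm⟩
      · exfalso
        have : ¬ (x ∈ I ∧ ∀ y ∈ I, (∃ t ∈ Mr r, x = y + t) → x = y) := hxS
        push_neg at this
        obtain ⟨y, hy, ⟨t, ht, hxt⟩, hne⟩ := this hx
        have hμy := mu_nonneg r (hIM hy)
        have hμt := mu_one_le r ht (by rintro rfl; exact hne (by simpa using hxt))
        have := mu_add r y t
        rw [← hxt] at this
        push_cast at hμ
        linarith
    | succ N ih =>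
      intro x hx hμ
      by_cases hxS : x ∈ S
      · exact ⟨x, hxS, 0, zero_mem_Mr r, (add_zero x).symm⟩
      · have : ¬ (x ∈ I ∧ ∀ y ∈ I, (∃ t ∈ Mr r, x = y + t) → x = y) := hxS
        push_neg at this
        obtain ⟨y, hy, ⟨t, ht, hxt⟩, hne⟩ := this hx
        have hμt := mu_one_le r ht (by rintro rfl; exact hne (by simpa using hxt))
        have hadd := mu_add r y t
        rw [← hxt] at hadd
        have hμy : mu r y ≤ N := by push_cast at hμ ⊢; linarith
        obtain ⟨s, hs, u, hu, hyu⟩ := ih y hy hμy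
        exact ⟨s, hs, u + t, add_mem_Mr r hu ht, by rw [hxt, hyu, add_assoc]⟩
  have hgen : ∀ x, x ∈ I ↔ ∃ s ∈ S, ∃ t ∈ Mr r, x = s + t := by
    intro x
    constructor
    · intro hx
      obtain ⟨N, hN⟩ := mu_nat r (hIM hx)
      exact gen N x hx (le_of_eq hN)
    · rintro ⟨s, hs, t, ht, rfl⟩
      exact hI s (hSI hs) t ht
  have hmin : ∀ T ⊆ I, (∀ x, x ∈ I ↔ ∃ s ∈ T, ∃ t ∈ Mr r, x = s + t) → S ⊆ T := by
    intro T hTI hTgen s hsS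
    obtain ⟨t, htT, u, hu, hsu⟩ := (hTgen s).1 (hSI hsS)
    have := hsS.2 t (hTI htT) ⟨u, hu, hsu⟩
    rwa [this]
  -- finiteness
  have hfin : S.Finite := by
    set f : (ℚ × (Fin n → ℕ)) → (Fin (n+1) → ℕ) :=
      fun x => Fin.cons (((Qd r : ℕ) : ℚ) * x.1).num.toNat x.2 with hf
    have hnum : ∀ x ∈ S, ∃ z : ℤ, (((Qd r : ℕ) : ℚ) * x.1 = (z : ℚ)) ∧ 0 ≤ z ∧
        (((Qd r : ℕ) : ℚ) * x.1).num = z := by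
      intro x hx
      obtain ⟨z, hz, hz0⟩ := Mr_fst_int r (hIM (hSI hx))
      exact ⟨z, hz, hz0, by rw [hz, Rat.num_intCast]⟩
    have hinj : Set.InjOn f S := by
      intro x hx y hy hfxy
      obtain ⟨zx, hzx, hzx0, hnx⟩ := hnum x hx
      obtain ⟨zy, hzy, hzy0, hny⟩ := hnum y hy
      have h0 : f x 0 = f y 0 := by rw [hfxy]
      have h2 : x.2 = y.2 := by
        funext j
        have := congrFun hfxy j.succ
        simpa [hf, Fin.cons_succ] using this
      have hz : zx = zy := by
        simp only [hf, Fin.cons_zero, hnx, hny] at h0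
        omega
      have h1 : x.1 = y.1 := by
        have hQ : (((Qd r : ℕ)) : ℚ) ≠ 0 := by
          exact_mod_cast (Qd_pos r).ne'
        have : ((Qd r : ℕ) : ℚ) * x.1 = ((Qd r : ℕ) : ℚ) * y.1 := by
          rw [hzx, hzy, hz]
        exact mul_left_cancel₀ hQ this
      exact Prod.ext h1 h2
    have hanti : IsAntichain (· ≤ ·) (f '' S) := by
      rintro a ⟨x, hx, rfl⟩ b ⟨y, hy, rfl⟩ hne hle
      obtain ⟨zx, hzx, hzx0, hnx⟩ := hnum x hx
      obtain ⟨zy, hzy, hzy0, hny⟩ := hnum y hy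
      apply hne
      have h0 : f x 0 ≤ f y 0 := hle 0
      have hzz : zx ≤ zy := by
        simp only [hf, Fin.cons_zero, hnx, hny] at h0
        omega
      have h1 : x.1 ≤ y.1 := by
        have hQ : (0:ℚ) < ((Qd r : ℕ) : ℚ) := by exact_mod_cast Qd_pos r
        have : ((Qd r : ℕ) : ℚ) * x.1 ≤ ((Qd r : ℕ) : ℚ) * y.1 := by
          rw [hzx, hzy]; exact_mod_cast hzz
        exact le_of_mul_le_mul_left this hQ
      have h2 : ∀ j, x.2 j ≤ y.2 j := by
        intro j
        have := hle j.succ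
        simpa [hf, Fin.cons_succ] using this
      obtain ⟨t, ht, hyt⟩ := diff_mem_Mr r (hIM (hSI hx)) (hIM (hSI hy)) h1 h2
      have := hy.2 x (hSI hx) ⟨t, ht, hyt⟩
      rw [this]
    have hpwo : Set.IsPWO (f '' S) :=
      Set.partiallyWellOrderedOn_of_wellQuasiOrdered wellQuasiOrdered_le (f '' S)
    have himg : (f '' S).Finite :=
      hanti.finite_of_partiallyWellOrderedOn hpwo
    exact Set.Finite.of_finite_image himg hinj
  refine ⟨S, ⟨hSI, hgen, hmin⟩, ?_, hfin, rfl⟩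
  rintro S' ⟨hS'I, hS'gen, hS'min⟩
  exact le_antisymm (hS'min S hSI hgen) (hmin S' hS'I hS'gen)
end

section
/- Fix a monomial order ≤ω on ℕ^n. For every nonzero f = Σ_{i∈ℕ^n} a_i X^i in K{X;r}, there exists a unique exponent i₀ with a_{i₀} ≠ 0 such that for every i ≠ i₀ with a_i ≠ 0 one has a_i X^i < a_{i₀} X^{i₀}, i.e., either val(a_i) − r·i > val(a_{i₀}) − r·i₀, or these valuations are equal and i <ω i₀. (Thus every nonzero Tate series has a well-defined leading term LT(f) = a_{i₀}X^{i₀}.) -/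
open MvPowerSeries

noncomputable section

/-- A normalized discrete valuation on a field `K`, complete with respect to
the associated distance. -/
structure IsCDVField {K : Type*} [Field K] (val : K → WithTop ℤ) : Prop where
  eq_top_iff : ∀ x : K, val x = ⊤ ↔ x = 0
  map_one : val 1 = 0
  map_mul : ∀ x y : K, val (x * y) = val x + val y
  min_le_val_add : ∀ x y : K, min (val x) (val y) ≤ val (x + y)
  surjective : ∀ m : ℤ, ∃ x : K, val x = (m : WithTop ℤ)
  complete : ∀ u : ℕ → K,
      (∀ M : ℤ, ∃ N : ℕ, ∀ p, N ≤ p → ∀ q, N ≤ q → (M : WithTop ℤ) ≤ val (u p - u q)) →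
      ∃ l : K, ∀ M : ℤ, ∃ N : ℕ, ∀ p, N ≤ p → (M : WithTop ℤ) ≤ val (u p - l)

/-- A monomial order: a well-order compatible with addition. -/
structure IsMonomialOrder {M : Type*} [AddCommMonoid M] (mo : M → M → Prop) : Prop where
  refl : ∀ i, mo i i
  trans : ∀ i j k, mo i j → mo j k → mo i k
  antisymm : ∀ i j, mo i j → mo j i → i = j
  total : ∀ i j, mo i j ∨ mo j i
  add_right : ∀ i j k, mo i j → mo (i + k) (j + k)
  wf : WellFounded fun i j => mo i j ∧ i ≠ j

variable {K : Type*} [Field K] {n : ℕ}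

/-- The valuation of `K`, with values in `WithTop ℚ`. -/
def valQ (val : K → WithTop ℤ) (a : K) : WithTop ℚ :=
  WithTop.map (fun m : ℤ => (m : ℚ)) (val a)

/-- The dot product `r·i`. -/
def wt (r : Fin n → ℚ) (i : Fin n →₀ ℕ) : ℚ :=
  ∑ j, r j * (i j : ℚ)

/-- `val_r` of the term `a·X^i`, namely `val a - r·i`. -/
def tval (val : K → WithTop ℤ) (r : Fin n → ℚ) (a : K) (i : Fin n →₀ ℕ) : WithTop ℚ :=
  valQ val a + ((-wt r i : ℚ) : WithTop ℚ)

/-- `val_r` of the coefficient term of `f` at exponent `i`. -/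
def cval (val : K → WithTop ℤ) (r : Fin n → ℚ) (f : MvPowerSeries (Fin n) K)
    (i : Fin n →₀ ℕ) : WithTop ℚ :=
  tval val r (MvPowerSeries.coeff i f) i

/-- Membership in the Tate algebra `K{X; r}`: the coefficient valuations
`val(a_i) - r·i` tend to `+∞`, i.e. for each `C` only finitely many of them are `< C`. -/
def IsTate (val : K → WithTop ℤ) (r : Fin n → ℚ) (f : MvPowerSeries (Fin n) K) : Prop :=
  ∀ C : ℚ, {i : Fin n →₀ ℕ | cval val r f i < (C : WithTop ℚ)}.Finite

/-- The Tate algebra `K{X; r}`, as a subset of the ring of power series. -/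
def TateSet (val : K → WithTop ℤ) (r : Fin n → ℚ) : Set (MvPowerSeries (Fin n) K) :=
  {f | IsTate val r f}

/-- The integral Tate algebra `K{X; r}°` (Tate series of nonnegative Gauss valuation). -/
def TateIntSet (val : K → WithTop ℤ) (r : Fin n → ℚ) : Set (MvPowerSeries (Fin n) K) :=
  {f | IsTate val r f ∧ ∀ i, (0 : WithTop ℚ) ≤ cval val r f i}

/-- The Gauss valuation of `f` equals `v`. -/
def GaussValEq (val : K → WithTop ℤ) (r : Fin n → ℚ) (f : MvPowerSeries (Fin n) K)
    (v : ℚ) : Prop :=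
  (∀ i, (v : WithTop ℚ) ≤ cval val r f i) ∧ ∃ i, cval val r f i = (v : WithTop ℚ)

/-- `J` is an ideal of the subring `A` of the power series ring. -/
structure IsIdealOf (A J : Set (MvPowerSeries (Fin n) K)) : Prop where
  subset : J ⊆ A
  zero_mem : (0 : MvPowerSeries (Fin n) K) ∈ J
  add_mem : ∀ f ∈ J, ∀ g ∈ J, f + g ∈ J
  neg_mem : ∀ f ∈ J, -f ∈ J
  smul_mem : ∀ a ∈ A, ∀ f ∈ J, a * f ∈ J

/-- `a·X^i < b·X^j` for the term order attached to `val`, `r` and the monomial order `mo`. -/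
def TermLt (val : K → WithTop ℤ) (r : Fin n → ℚ) (mo : (Fin n →₀ ℕ) → (Fin n →₀ ℕ) → Prop)
    (a : K) (i : Fin n →₀ ℕ) (b : K) (j : Fin n →₀ ℕ) : Prop :=
  tval val r b j < tval val r a i ∨ (tval val r a i = tval val r b j ∧ i ≠ j ∧ mo i j)

/-- `a·X^i ≤ b·X^j` for the term order. -/
def TermLe (val : K → WithTop ℤ) (r : Fin n → ℚ) (mo : (Fin n →₀ ℕ) → (Fin n →₀ ℕ) → Prop)
    (a : K) (i : Fin n →₀ ℕ) (b : K) (j : Fin n →₀ ℕ) : Prop :=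
  tval val r b j < tval val r a i ∨ (tval val r a i = tval val r b j ∧ mo i j)

/-- `a·X^i` is the leading term of `f`. -/
def IsLeadingTerm (val : K → WithTop ℤ) (r : Fin n → ℚ)
    (mo : (Fin n →₀ ℕ) → (Fin n →₀ ℕ) → Prop)
    (f : MvPowerSeries (Fin n) K) (a : K) (i : Fin n →₀ ℕ) : Prop :=
  MvPowerSeries.coeff i f = a ∧ a ≠ 0 ∧
    ∀ j, MvPowerSeries.coeff j f ≠ 0 → j ≠ i →
      TermLt val r mo (MvPowerSeries.coeff j f) j a i

/-- `a·X^i` divides `b·X^j` in the monoid of terms `T(r)`. -/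
def TDiv (a : K) (i : Fin n →₀ ℕ) (b : K) (j : Fin n →₀ ℕ) : Prop :=
  a ≠ 0 ∧ b ≠ 0 ∧ ∃ k, j = i + k

/-- `a·X^i` divides `b·X^j` in the monoid of integral terms `T°(r)`. -/
def TIntDiv (val : K → WithTop ℤ) (r : Fin n → ℚ) (a : K) (i : Fin n →₀ ℕ)
    (b : K) (j : Fin n →₀ ℕ) : Prop :=
  a ≠ 0 ∧ b ≠ 0 ∧ ∃ k, j = i + k ∧ (0 : WithTop ℚ) ≤ tval val r (b * a⁻¹) k

/-- `g` is a Gröbner basis of `J`, as an ideal of `K{X;r}`. -/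
def IsGB (val : K → WithTop ℤ) (r : Fin n → ℚ) (mo : (Fin n →₀ ℕ) → (Fin n →₀ ℕ) → Prop)
    (J : Set (MvPowerSeries (Fin n) K)) {s : ℕ} (g : Fin s → MvPowerSeries (Fin n) K) : Prop :=
  (∀ k, g k ∈ J ∧ g k ≠ 0) ∧
    ∀ f ∈ J, ∀ a i, IsLeadingTerm val r mo f a i →
      ∃ k b j, IsLeadingTerm val r mo (g k) b j ∧ TDiv b j a i

/-- `g` is a Gröbner basis of `J`, as an ideal of `K{X;r}°`. -/
def IsGBInt (val : K → WithTop ℤ) (r : Fin n → ℚ) (mo : (Fin n →₀ ℕ) → (Fin n →₀ ℕ) → Prop)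
    (J : Set (MvPowerSeries (Fin n) K)) {s : ℕ} (g : Fin s → MvPowerSeries (Fin n) K) : Prop :=
  (∀ k, g k ∈ J ∧ g k ≠ 0) ∧
    ∀ f ∈ J, ∀ a i, IsLeadingTerm val r mo f a i →
      ∃ k b j, IsLeadingTerm val r mo (g k) b j ∧ TIntDiv val r b j a i

/-- The set `LT(J)` of leading terms of nonzero elements of `J`. -/
def LTSet (val : K → WithTop ℤ) (r : Fin n → ℚ) (mo : (Fin n →₀ ℕ) → (Fin n →₀ ℕ) → Prop)
    (J : Set (MvPowerSeries (Fin n) K)) : Set (K × (Fin n →₀ ℕ)) :=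
  {t | ∃ f ∈ J, IsLeadingTerm val r mo f t.1 t.2}

/-- Exponents of elements of `LT(J)`: the image of `LT(J)` modulo units of `K`. -/
def LTExpSet (val : K → WithTop ℤ) (r : Fin n → ℚ) (mo : (Fin n →₀ ℕ) → (Fin n →₀ ℕ) → Prop)
    (J : Set (MvPowerSeries (Fin n) K)) : Set (Fin n →₀ ℕ) :=
  {i | ∃ a, (a, i) ∈ LTSet val r mo J}

/-- The skeleton of `LT(J)` (modulo units of `K`): minimal elements for divisibility. -/
def SkelExp (val : K → WithTop ℤ) (r : Fin n → ℚ) (mo : (Fin n →₀ ℕ) → (Fin n →₀ ℕ) → Prop)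
    (J : Set (MvPowerSeries (Fin n) K)) : Set (Fin n →₀ ℕ) :=
  {i | i ∈ LTExpSet val r mo J ∧ ∀ j ∈ LTExpSet val r mo J, (∃ k, i = j + k) → j = i}

/-- The image of `LT(J)` modulo units of `K°`: pairs (exponent, valuation of the term). -/
def LTClassSet (val : K → WithTop ℤ) (r : Fin n → ℚ) (mo : (Fin n →₀ ℕ) → (Fin n →₀ ℕ) → Prop)
    (J : Set (MvPowerSeries (Fin n) K)) : Set ((Fin n →₀ ℕ) × ℚ) :=
  {c | ∃ a, (a, c.1) ∈ LTSet val r mo J ∧ tval val r a c.1 = (c.2 : WithTop ℚ)}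

/-- Divisibility of classes of integral terms modulo units of `K°`. -/
def ClassDiv {n : ℕ} (c d : (Fin n →₀ ℕ) × ℚ) : Prop :=
  (∃ k, d.1 = c.1 + k) ∧ c.2 ≤ d.2

/-- The skeleton of `LT(J)` modulo units of `K°`. -/
def SkelClass (val : K → WithTop ℤ) (r : Fin n → ℚ) (mo : (Fin n →₀ ℕ) → (Fin n →₀ ℕ) → Prop)
    (J : Set (MvPowerSeries (Fin n) K)) : Set ((Fin n →₀ ℕ) × ℚ) :=
  {c | c ∈ LTClassSet val r mo J ∧ ∀ d ∈ LTClassSet val r mo J, ClassDiv d c → d = c}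

/-- Minimal Gröbner basis of an ideal of `K{X;r}`: the classes of the leading terms
modulo units of `K` are pairwise distinct and are exactly the skeleton of `LT(J)`. -/
def IsMinGB (val : K → WithTop ℤ) (r : Fin n → ℚ) (mo : (Fin n →₀ ℕ) → (Fin n →₀ ℕ) → Prop)
    (J : Set (MvPowerSeries (Fin n) K)) {s : ℕ} (g : Fin s → MvPowerSeries (Fin n) K) : Prop :=
  IsGB val r mo J g ∧ ∃ e : Fin s → (Fin n →₀ ℕ),
    (∀ k, ∃ a, IsLeadingTerm val r mo (g k) a (e k)) ∧
    Function.Injective e ∧ Set.range e = SkelExp val r mo J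

/-- Minimal Gröbner basis of an ideal of `K{X;r}°`. -/
def IsMinGBInt (val : K → WithTop ℤ) (r : Fin n → ℚ) (mo : (Fin n →₀ ℕ) → (Fin n →₀ ℕ) → Prop)
    (J : Set (MvPowerSeries (Fin n) K)) {s : ℕ} (g : Fin s → MvPowerSeries (Fin n) K) : Prop :=
  IsGBInt val r mo J g ∧ ∃ e : Fin s → ((Fin n →₀ ℕ) × ℚ),
    (∀ k, ∃ a, IsLeadingTerm val r mo (g k) a (e k).1 ∧
      tval val r a (e k).1 = ((e k).2 : WithTop ℚ)) ∧
    Function.Injective e ∧ Set.range e = SkelClass val r mo J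

/-- The leading term of `f` (via choice). -/
def leadTerm (val : K → WithTop ℤ) (r : Fin n → ℚ) (mo : (Fin n →₀ ℕ) → (Fin n →₀ ℕ) → Prop)
    (f : MvPowerSeries (Fin n) K) : K × (Fin n →₀ ℕ) :=
  Classical.epsilon fun p => IsLeadingTerm val r mo f p.1 p.2

/-- Multiplication of a power series by the term `t`. -/
def termMul (t : K × (Fin n →₀ ℕ)) (f : MvPowerSeries (Fin n) K) : MvPowerSeries (Fin n) K :=
  (MvPowerSeries.monomial t.2 t.1) * f

/-- The S-polynomial `S(f, g) = (LT(g)/gcd(LT f, LT g))·f - (LT(f)/gcd(LT f, LT g))·g`. -/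
def Spoly (val : K → WithTop ℤ) (π : K) (r : Fin n → ℚ)
    (mo : (Fin n →₀ ℕ) → (Fin n →₀ ℕ) → Prop)
    (f g : MvPowerSeries (Fin n) K) : MvPowerSeries (Fin n) K :=
  let a := (leadTerm val r mo f).1
  let i := (leadTerm val r mo f).2
  let b := (leadTerm val r mo g).1
  let j := (leadTerm val r mo g).2
  let m : ℤ := min ((val a).untopD 0) ((val b).untopD 0)
  termMul (b * π ^ (-m), j - i) f - termMul (a * π ^ (-m), i - j) g

/-- `f` reduces to zero modulo the family `g` with quotients in `A`. -/
def ReducesToZero (val : K → WithTop ℤ) (r : Fin n → ℚ)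
    (mo : (Fin n →₀ ℕ) → (Fin n →₀ ℕ) → Prop) (A : Set (MvPowerSeries (Fin n) K))
    {s : ℕ} (g : Fin s → MvPowerSeries (Fin n) K) (f : MvPowerSeries (Fin n) K) : Prop :=
  f = 0 ∨ ∃ q : Fin s → MvPowerSeries (Fin n) K, (∀ k, q k ∈ A) ∧ f = ∑ k, q k * g k ∧
    ∀ k i, MvPowerSeries.coeff i (q k) ≠ 0 →
      ∀ b j, IsLeadingTerm val r mo (g k) b j →
      ∀ a₀ i₀, IsLeadingTerm val r mo f a₀ i₀ →
        TermLe val r mo (MvPowerSeries.coeff i (q k) * b) (i + j) a₀ i₀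

lemma exists_mo_max {α : Type*} (mo : α → α → Prop)
    (hrefl : ∀ i, mo i i)
    (htrans : ∀ i j k, mo i j → mo j k → mo i k) (htot : ∀ i j, mo i j ∨ mo j i)
    (s : Finset α) (hs : s.Nonempty) : ∃ b ∈ s, ∀ a ∈ s, mo a b := by
  classical
  induction s using Finset.induction with
  | empty => exact absurd hs (by simp)
  | @insert a s ha ih =>
    rcases s.eq_empty_or_nonempty with rfl | hs'
    · exact ⟨a, by simp, by simpa using hrefl a⟩
    · obtain ⟨b, hb, hmax⟩ := ih hs'
      rcases htot a b with h | h
      · exact ⟨b, Finset.mem_insert_of_mem hb, by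
          intro x hx
          rcases Finset.mem_insert.mp hx with rfl | hx
          · exact h
          · exact hmax x hx⟩
      · exact ⟨a, Finset.mem_insert_self a s, by
          intro x hx
          rcases Finset.mem_insert.mp hx with rfl | hx
          · exact hrefl x
          · exact htrans x b a (hmax x hx) h⟩

lemma cval_ne_top {K : Type*} [Field K] {n : ℕ} (val : K → WithTop ℤ)
    (hval : IsCDVField val) (r : Fin n → ℚ) (f : MvPowerSeries (Fin n) K)
    {i : Fin n →₀ ℕ} (hi : MvPowerSeries.coeff i f ≠ 0) :
    cval val r f i ≠ ⊤ := by
  have h1 : val (MvPowerSeries.coeff i f) ≠ ⊤ := fun h => hi ((hval.eq_top_iff _).mp h)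
  have h2 : valQ val (MvPowerSeries.coeff i f) ≠ ⊤ := by
    simp only [valQ, ne_eq, WithTop.map_eq_top_iff]
    exact h1
  exact WithTop.add_ne_top.mpr ⟨h2, WithTop.coe_ne_top⟩

/-- every nonzero Tate series has a unique leading term. -/
theorem statement6 (val : K → WithTop ℤ) (hval : IsCDVField val) (r : Fin n → ℚ)
    (mo : (Fin n →₀ ℕ) → (Fin n →₀ ℕ) → Prop) (hmo : IsMonomialOrder mo)
    (f : MvPowerSeries (Fin n) K) (hf : IsTate val r f) (hf0 : f ≠ 0) :
    ∃! i₀ : Fin n →₀ ℕ, MvPowerSeries.coeff i₀ f ≠ 0 ∧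
      ∀ i, MvPowerSeries.coeff i f ≠ 0 → i ≠ i₀ →
        TermLt val r mo (MvPowerSeries.coeff i f) i (MvPowerSeries.coeff i₀ f) i₀ := by
  classical
  -- pick a nonzero coefficient
  obtain ⟨j, hj⟩ : ∃ j, MvPowerSeries.coeff j f ≠ 0 := by
    by_contra h
    push_neg at h
    exact hf0 (MvPowerSeries.ext fun j => by simpa using h j)
  obtain ⟨q, hq⟩ := WithTop.ne_top_iff_exists.mp (cval_ne_top val hval r f hj)
  set C : ℚ := q + 1 with hC
  have hjC : cval val r f j < (C : WithTop ℚ) := by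
    rw [← hq]
    exact_mod_cast (by linarith : q < C)
  set S : Finset (Fin n →₀ ℕ) :=
    (hf C).toFinset.filter (fun i => MvPowerSeries.coeff i f ≠ 0) with hS
  have hjS : j ∈ S := by
    simp only [hS, Finset.mem_filter, Set.Finite.mem_toFinset, Set.mem_setOf_eq]
    exact ⟨hjC, hj⟩
  have hSne : S.Nonempty := ⟨j, hjS⟩
  set V : Finset (WithTop ℚ) := S.image (cval val r f) with hV
  have hVne : V.Nonempty := hSne.image _
  set M : WithTop ℚ := V.min' hVne with hM
  have hM_le : ∀ i ∈ S, M ≤ cval val r f i := fun i hi =>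
    V.min'_le _ (Finset.mem_image_of_mem _ hi)
  have hMltC : M < (C : WithTop ℚ) := lt_of_le_of_lt (hM_le j hjS) hjC
  -- exponents achieving the minimum
  set T : Finset (Fin n →₀ ℕ) := S.filter (fun i => cval val r f i = M) with hT
  have hTne : T.Nonempty := by
    obtain ⟨i, hiS, hiM⟩ := Finset.mem_image.mp (V.min'_mem hVne)
    exact ⟨i, Finset.mem_filter.mpr ⟨hiS, hiM⟩⟩
  obtain ⟨i₀, hi₀T, hi₀max⟩ := exists_mo_max mo hmo.refl hmo.trans hmo.total T hTne
  have hi₀S : i₀ ∈ S := (Finset.mem_filter.mp hi₀T).1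
  have hi₀M : cval val r f i₀ = M := (Finset.mem_filter.mp hi₀T).2
  have hi₀ne : MvPowerSeries.coeff i₀ f ≠ 0 := (Finset.mem_filter.mp hi₀S).2
  -- main property
  have hmain : ∀ i, MvPowerSeries.coeff i f ≠ 0 → i ≠ i₀ →
      TermLt val r mo (MvPowerSeries.coeff i f) i (MvPowerSeries.coeff i₀ f) i₀ := by
    intro i hi hne
    by_cases hiS : i ∈ S
    · have hMle : M ≤ cval val r f i := hM_le i hiS
      rcases lt_or_eq_of_le hMle with hlt | heq
      · exact Or.inl (show cval val r f i₀ < cval val r f i from lt_of_le_of_lt hi₀M.le hlt)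
      · have hiT : i ∈ T := Finset.mem_filter.mpr ⟨hiS, heq.symm⟩
        exact Or.inr ⟨show cval val r f i = cval val r f i₀ from heq.symm.trans hi₀M.symm, hne, hi₀max i hiT⟩
    · have : ¬ cval val r f i < (C : WithTop ℚ) := by
        intro hlt
        exact hiS (Finset.mem_filter.mpr ⟨(hf C).mem_toFinset.mpr hlt, hi⟩)
      have hge : (C : WithTop ℚ) ≤ cval val r f i := not_lt.mp this
      exact Or.inl (show cval val r f i₀ < cval val r f i from hi₀M.le.trans_lt (hMltC.trans_le hge))
  refine ⟨i₀, ⟨hi₀ne, hmain⟩, ?_⟩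
  -- uniqueness
  rintro i₁ ⟨hi₁ne, hi₁max⟩
  by_contra hne
  have h1 := hi₁max i₀ hi₀ne (Ne.symm hne)
  have h2 := hmain i₁ hi₁ne hne
  rcases h1 with h1 | ⟨h1e, _, h1mo⟩ <;> rcases h2 with h2 | ⟨h2e, _, h2mo⟩
  · exact absurd (h1.trans h2) (lt_irrefl _)
  · exact absurd (h2e ▸ h1) (lt_irrefl _)
  · exact absurd (h1e ▸ h2) (lt_irrefl _)
  · exact hne (hmo.antisymm i₁ i₀ h2mo h1mo)
end
end

section
/- Let J be an ideal of K{X;r} (resp. of K{X;r}°) and let G be a Gröbner basis of J. Then there exists a subset G' ⊆ G that is a minimal Gröbner basis of J. -/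
open MvPowerSeries

noncomputable section

variable {K : Type*} [Field K] {n : ℕ}

namespace Statement11Aux
set_option linter.unusedSectionVars false

variable {K : Type*} [Field K] {n : ℕ}

lemma termLt_asymm {val : K → WithTop ℤ} {r : Fin n → ℚ}
    {mo : (Fin n →₀ ℕ) → (Fin n →₀ ℕ) → Prop}
    (hmo : IsMonomialOrder mo) {a : K} {i : Fin n →₀ ℕ} {b : K} {j : Fin n →₀ ℕ}
    (h1 : TermLt val r mo a i b j) (h2 : TermLt val r mo b j a i) : False := by
  rcases h1 with h1 | ⟨e1, ne1, m1⟩ <;> rcases h2 with h2 | ⟨e2, ne2, m2⟩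
  · exact absurd h1 (not_lt.mpr h2.le)
  · rw [e2] at h1; exact lt_irrefl _ h1
  · rw [e1] at h2; exact lt_irrefl _ h2
  · exact ne1 (hmo.antisymm i j m1 m2)

lemma leadExp_unique {val : K → WithTop ℤ} {r : Fin n → ℚ}
    {mo : (Fin n →₀ ℕ) → (Fin n →₀ ℕ) → Prop}
    (hmo : IsMonomialOrder mo) {f : MvPowerSeries (Fin n) K} {a : K} {i : Fin n →₀ ℕ}
    {b : K} {j : Fin n →₀ ℕ}
    (h1 : IsLeadingTerm val r mo f a i) (h2 : IsLeadingTerm val r mo f b j) :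
    i = j ∧ a = b := by
  obtain ⟨hc1, ha, hm1⟩ := h1
  obtain ⟨hc2, hb, hm2⟩ := h2
  by_cases hij : i = j
  · subst hij
    exact ⟨rfl, by rw [← hc1, hc2]⟩
  · have t1 := hm1 j (by rw [hc2]; exact hb) (Ne.symm hij)
    have t2 := hm2 i (by rw [hc1]; exact ha) hij
    rw [hc2] at t1
    rw [hc1] at t2
    exact absurd (termLt_asymm hmo t2 t1) id

/-- The rational value of the valuation of a nonzero element. -/
def vq (val : K → WithTop ℤ) (a : K) : ℚ := (((val a).untopD 0 : ℤ) : ℚ)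

lemma val_eq_coe {val : K → WithTop ℤ} (hval : IsCDVField val) {a : K} (ha : a ≠ 0) :
    ∃ m : ℤ, val a = (m : WithTop ℤ) := by
  have h : val a ≠ ⊤ := fun h => ha ((hval.eq_top_iff a).1 h)
  obtain ⟨m, hm⟩ := WithTop.ne_top_iff_exists.1 h
  exact ⟨m, hm.symm⟩

lemma tval_eq {val : K → WithTop ℤ} (hval : IsCDVField val) (r : Fin n → ℚ) {a : K}
    (ha : a ≠ 0) (i : Fin n →₀ ℕ) :
    tval val r a i = ((vq val a - wt r i : ℚ) : WithTop ℚ) := by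
  obtain ⟨m, hm⟩ := val_eq_coe hval ha
  unfold tval valQ vq
  rw [hm]
  simp only [WithTop.map_coe, WithTop.untopD_coe]
  rw [← WithTop.coe_add]
  congr 1
  ring

lemma vq_mul {val : K → WithTop ℤ} (hval : IsCDVField val) {a b : K}
    (ha : a ≠ 0) (hb : b ≠ 0) : vq val (a * b) = vq val a + vq val b := by
  obtain ⟨p, hp⟩ := val_eq_coe hval ha
  obtain ⟨q, hq⟩ := val_eq_coe hval hb
  unfold vq
  rw [hval.map_mul, hp, hq, ← WithTop.coe_add]
  simp only [WithTop.untopD_coe]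
  push_cast
  ring

lemma vq_mul_inv {val : K → WithTop ℤ} (hval : IsCDVField val) {a b : K}
    (ha : a ≠ 0) (hb : b ≠ 0) : vq val (a * b⁻¹) = vq val a - vq val b := by
  have h := vq_mul hval (mul_ne_zero ha (inv_ne_zero hb)) hb
  rw [inv_mul_cancel_right₀ hb] at h
  linarith

lemma wt_add (r : Fin n → ℚ) (i j : Fin n →₀ ℕ) : wt r (i + j) = wt r i + wt r j := by
  unfold wt
  rw [← Finset.sum_add_distrib]
  refine Finset.sum_congr rfl fun k _ => ?_
  simp only [Finsupp.add_apply]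
  push_cast
  ring

lemma tval_sub {val : K → WithTop ℤ} (hval : IsCDVField val) (r : Fin n → ℚ) {a b : K}
    (ha : a ≠ 0) (hb : b ≠ 0) {i j c : Fin n →₀ ℕ} (hc : i = j + c) :
    tval val r (a * b⁻¹) c =
      (((vq val a - wt r i) - (vq val b - wt r j) : ℚ) : WithTop ℚ) := by
  rw [tval_eq hval r (mul_ne_zero ha (inv_ne_zero hb)), vq_mul_inv hval ha hb]
  have hw : wt r i = wt r j + wt r c := by rw [hc, wt_add]
  norm_cast
  linarith

lemma classDiv_iff {n : ℕ} (c d : (Fin n →₀ ℕ) × ℚ) : ClassDiv c d ↔ c ≤ d := by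
  unfold ClassDiv
  rw [Prod.le_def]
  constructor
  · rintro ⟨h1, h2⟩
    exact ⟨le_iff_exists_add.2 h1, h2⟩
  · rintro ⟨h1, h2⟩
    exact ⟨le_iff_exists_add.1 h1, h2⟩

lemma tintdiv_imp {val : K → WithTop ℤ} (hval : IsCDVField val) {r : Fin n → ℚ} {a b : K}
    {i j : Fin n →₀ ℕ} (h : TIntDiv val r b j a i) :
    ((j, vq val b - wt r j) : (Fin n →₀ ℕ) × ℚ) ≤ (i, vq val a - wt r i) := by
  obtain ⟨hb, ha, c, hc, hpos⟩ := h
  rw [Prod.mk_le_mk]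
  refine ⟨le_iff_exists_add.2 ⟨c, hc⟩, ?_⟩
  rw [tval_sub hval r ha hb hc] at hpos
  have h0 : (0:ℚ) ≤ (vq val a - wt r i) - (vq val b - wt r j) := by exact_mod_cast hpos
  linarith

lemma le_imp_tintdiv {val : K → WithTop ℤ} (hval : IsCDVField val) {r : Fin n → ℚ} {a b : K}
    (ha : a ≠ 0) (hb : b ≠ 0) {i j : Fin n →₀ ℕ} {v w : ℚ}
    (hv : tval val r a i = (v : WithTop ℚ)) (hw : tval val r b j = (w : WithTop ℚ))
    (h : ((j, w) : (Fin n →₀ ℕ) × ℚ) ≤ (i, v)) : TIntDiv val r b j a i := by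
  obtain ⟨h1, h2⟩ := Prod.mk_le_mk.1 h
  obtain ⟨c, hc⟩ := le_iff_exists_add.1 h1
  refine ⟨hb, ha, c, hc, ?_⟩
  rw [tval_sub hval r ha hb hc]
  have hva : v = vq val a - wt r i := by
    rw [tval_eq hval r ha] at hv; exact_mod_cast hv.symm
  have hwb : w = vq val b - wt r j := by
    rw [tval_eq hval r hb] at hw; exact_mod_cast hw.symm
  have h0 : (0:ℚ) ≤ (vq val a - wt r i) - (vq val b - wt r j) := by
    rw [← hva, ← hwb]; linarith
  exact_mod_cast h0

end Statement11Aux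
namespace Statement11Aux

lemma case1 {K : Type*} [Field K] {n : ℕ} (val : K → WithTop ℤ) (hval : IsCDVField val)
    (r : Fin n → ℚ) (mo : (Fin n →₀ ℕ) → (Fin n →₀ ℕ) → Prop) (hmo : IsMonomialOrder mo)
    (J : Set (MvPowerSeries (Fin n) K))
    (s : ℕ) (g : Fin s → MvPowerSeries (Fin n) K) (hg : IsGB val r mo J g) :
    ∃ (s' : ℕ) (g' : Fin s' → MvPowerSeries (Fin n) K),
      (∀ k, ∃ l, g' k = g l) ∧ IsMinGB val r mo J g' := by
  classical
  set E : Set (Fin n →₀ ℕ) := {i | ∃ l a, IsLeadingTerm val r mo (g l) a i} with hE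
  have hEfin : E.Finite := by
    have hsub : E ⊆ ⋃ l : Fin s, {i | ∃ a, IsLeadingTerm val r mo (g l) a i} := by
      rintro i ⟨l, a, h⟩
      exact Set.mem_iUnion.2 ⟨l, a, h⟩
    refine Set.Finite.subset (Set.finite_iUnion fun l => ?_) hsub
    refine Set.Subsingleton.finite ?_
    rintro i ⟨a, hai⟩ j ⟨b, hbj⟩
    exact (leadExp_unique hmo hai hbj).1
  have hEsub : E ⊆ LTExpSet val r mo J := by
    rintro i ⟨l, a, h⟩
    exact ⟨a, g l, (hg.1 l).1, h⟩
  have hEdiv : ∀ i ∈ LTExpSet val r mo J, ∃ e ∈ E, e ≤ i := by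
    rintro i ⟨a, f, hf, hlt⟩
    obtain ⟨k, b, j, hgb, hdiv⟩ := hg.2 f hf a i hlt
    exact ⟨j, ⟨k, b, hgb⟩, le_iff_exists_add.2 hdiv.2.2⟩
  set M : Set (Fin n →₀ ℕ) := {i | i ∈ E ∧ ∀ j ∈ E, j ≤ i → j = i} with hM
  have hMdiv : ∀ i ∈ LTExpSet val r mo J, ∃ m ∈ M, m ≤ i := by
    intro i hi
    obtain ⟨e0, he0, he0i⟩ := hEdiv i hi
    have hS : ({x ∈ E | x ≤ e0}).Finite := hEfin.subset (Set.sep_subset _ _)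
    obtain ⟨m, ⟨hmE, hme0⟩, hmin⟩ :=
      Set.Finite.exists_minimalFor id _ hS ⟨e0, he0, le_rfl⟩
    refine ⟨m, ⟨hmE, fun j hj hjm => ?_⟩, le_trans hme0 he0i⟩
    exact le_antisymm hjm (hmin ⟨hj, le_trans hjm hme0⟩ hjm)
  have hMskel : M = SkelExp val r mo J := by
    ext i
    constructor
    · rintro ⟨hiE, hmin⟩
      refine ⟨hEsub hiE, fun j hj hdvd => ?_⟩
      have hji : j ≤ i := le_iff_exists_add.2 hdvd
      obtain ⟨e, heE, hej⟩ := hEdiv j hj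
      have hei : e = i := hmin e heE (le_trans hej hji)
      exact le_antisymm hji (hei ▸ hej)
    · rintro ⟨hiL, hmin⟩
      obtain ⟨e, heE, hei⟩ := hEdiv i hiL
      have hei' : e = i := hmin e (hEsub heE) (le_iff_exists_add.1 hei)
      subst hei'
      exact ⟨heE, fun j hjE hji => hmin j (hEsub hjE) (le_iff_exists_add.1 hji)⟩
  have hMfin : M.Finite := hEfin.subset fun i hi => hi.1
  set s' := hMfin.toFinset.card with hs'
  set eqv := hMfin.toFinset.equivFin with heqv
  set e : Fin s' → (Fin n →₀ ℕ) := fun k => ((eqv.symm k : hMfin.toFinset) : Fin n →₀ ℕ)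
    with he
  have heM : ∀ k, e k ∈ M := fun k => hMfin.mem_toFinset.1 (eqv.symm k).2
  have he_inj : Function.Injective e := fun k l h =>
    eqv.symm.injective (Subtype.ext h)
  have he_range : Set.range e = M := by
    ext i
    constructor
    · rintro ⟨k, rfl⟩
      exact heM k
    · intro hi
      refine ⟨eqv ⟨i, hMfin.mem_toFinset.2 hi⟩, ?_⟩
      simp [he]
  have hspec : ∀ k : Fin s', ∃ l, ∃ a, IsLeadingTerm val r mo (g l) a (e k) :=
    fun k => (heM k).1
  set g' : Fin s' → MvPowerSeries (Fin n) K := fun k => g (hspec k).choose with hg'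
  have hg'lead : ∀ k, ∃ a, IsLeadingTerm val r mo (g' k) a (e k) :=
    fun k => (hspec k).choose_spec
  refine ⟨s', g', fun k => ⟨(hspec k).choose, rfl⟩,
    ⟨fun k => hg.1 _, ?_⟩, e, hg'lead, he_inj, he_range.trans hMskel⟩
  intro f hf a i hlt
  obtain ⟨m, hmM, hmi⟩ := hMdiv i ⟨a, f, hf, hlt⟩
  have hmr : m ∈ Set.range e := by rw [he_range]; exact hmM
  obtain ⟨k, hk⟩ := hmr
  obtain ⟨b, hb⟩ := hg'lead k
  obtain ⟨c, hc⟩ := le_iff_exists_add.1 (hk ▸ hmi)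
  exact ⟨k, b, e k, hb, hb.2.1, hlt.2.1, c, hc⟩

lemma case2 {K : Type*} [Field K] {n : ℕ} (val : K → WithTop ℤ) (hval : IsCDVField val)
    (r : Fin n → ℚ) (mo : (Fin n →₀ ℕ) → (Fin n →₀ ℕ) → Prop) (hmo : IsMonomialOrder mo)
    (J : Set (MvPowerSeries (Fin n) K))
    (s : ℕ) (g : Fin s → MvPowerSeries (Fin n) K) (hg : IsGBInt val r mo J g) :
    ∃ (s' : ℕ) (g' : Fin s' → MvPowerSeries (Fin n) K),
      (∀ k, ∃ l, g' k = g l) ∧ IsMinGBInt val r mo J g' := by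
  classical
  set E : Set ((Fin n →₀ ℕ) × ℚ) :=
    {c | ∃ l a, IsLeadingTerm val r mo (g l) a c.1 ∧
      tval val r a c.1 = (c.2 : WithTop ℚ)} with hE
  have hEfin : E.Finite := by
    have hsub : E ⊆ ⋃ l : Fin s, {c | ∃ a, IsLeadingTerm val r mo (g l) a c.1 ∧
        tval val r a c.1 = (c.2 : WithTop ℚ)} := by
      rintro c ⟨l, a, h⟩
      exact Set.mem_iUnion.2 ⟨l, a, h⟩
    refine Set.Finite.subset (Set.finite_iUnion fun l => ?_) hsub
    refine Set.Subsingleton.finite ?_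
    rintro c ⟨a, hac, hta⟩ d ⟨b, hbd, htb⟩
    obtain ⟨h1, h2⟩ := leadExp_unique hmo hac hbd
    subst h2
    rw [h1] at hta
    rw [hta] at htb
    have : c.2 = d.2 := by exact_mod_cast htb
    exact Prod.ext h1 this
  have hEsub : E ⊆ LTClassSet val r mo J := by
    rintro c ⟨l, a, h, ht⟩
    exact ⟨a, ⟨g l, (hg.1 l).1, h⟩, ht⟩
  have hEdiv : ∀ c ∈ LTClassSet val r mo J, ∃ d ∈ E, d ≤ c := by
    rintro c ⟨a, ⟨f, hf, hlt⟩, hta⟩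
    obtain ⟨k, b, j, hgb, hdiv⟩ := hg.2 f hf a c.1 hlt
    have hb0 : b ≠ 0 := hdiv.1
    have ha0 : a ≠ 0 := hdiv.2.1
    refine ⟨(j, vq val b - wt r j), ⟨k, b, hgb, tval_eq hval r hb0 j⟩, ?_⟩
    have hle := tintdiv_imp hval hdiv
    have hc2 : c.2 = vq val a - wt r c.1 := by
      rw [tval_eq hval r ha0] at hta
      exact_mod_cast hta.symm
    rw [← Prod.mk.eta (p := c), ← hc2] at hle
    exact hle
  set M : Set ((Fin n →₀ ℕ) × ℚ) := {c | c ∈ E ∧ ∀ d ∈ E, d ≤ c → d = c} with hM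
  have hMdiv : ∀ c ∈ LTClassSet val r mo J, ∃ m ∈ M, m ≤ c := by
    intro c hc
    obtain ⟨e0, he0, he0c⟩ := hEdiv c hc
    have hS : ({x ∈ E | x ≤ e0}).Finite := hEfin.subset (Set.sep_subset _ _)
    obtain ⟨m, ⟨hmE, hme0⟩, hmin⟩ :=
      Set.Finite.exists_minimalFor id _ hS ⟨e0, he0, le_rfl⟩
    refine ⟨m, ⟨hmE, fun d hd hdm => ?_⟩, le_trans hme0 he0c⟩
    exact le_antisymm hdm (hmin ⟨hd, le_trans hdm hme0⟩ hdm)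
  have hMskel : M = SkelClass val r mo J := by
    ext c
    constructor
    · rintro ⟨hcE, hmin⟩
      refine ⟨hEsub hcE, fun d hd hdvd => ?_⟩
      have hdc : d ≤ c := (classDiv_iff d c).1 hdvd
      obtain ⟨e, heE, hed⟩ := hEdiv d hd
      have hec : e = c := hmin e heE (le_trans hed hdc)
      exact le_antisymm hdc (hec ▸ hed)
    · rintro ⟨hcL, hmin⟩
      obtain ⟨e, heE, hec⟩ := hEdiv c hcL
      have hec' : e = c := hmin e (hEsub heE) ((classDiv_iff e c).2 hec)
      subst hec'
      exact ⟨heE, fun d hdE hdc => hmin d (hEsub hdE) ((classDiv_iff d e).2 hdc)⟩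
  have hMfin : M.Finite := hEfin.subset fun c hc => hc.1
  set s' := hMfin.toFinset.card with hs'
  set eqv := hMfin.toFinset.equivFin with heqv
  set e : Fin s' → ((Fin n →₀ ℕ) × ℚ) :=
    fun k => ((eqv.symm k : hMfin.toFinset) : (Fin n →₀ ℕ) × ℚ) with he
  have heM : ∀ k, e k ∈ M := fun k => hMfin.mem_toFinset.1 (eqv.symm k).2
  have he_inj : Function.Injective e := fun k l h =>
    eqv.symm.injective (Subtype.ext h)
  have he_range : Set.range e = M := by
    ext c
    constructor
    · rintro ⟨k, rfl⟩
      exact heM k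
    · intro hc
      refine ⟨eqv ⟨c, hMfin.mem_toFinset.2 hc⟩, ?_⟩
      simp [he]
  have hspec : ∀ k : Fin s', ∃ l, ∃ a, IsLeadingTerm val r mo (g l) a (e k).1 ∧
      tval val r a (e k).1 = ((e k).2 : WithTop ℚ) :=
    fun k => (heM k).1
  set g' : Fin s' → MvPowerSeries (Fin n) K := fun k => g (hspec k).choose with hg'
  have hg'lead : ∀ k, ∃ a, IsLeadingTerm val r mo (g' k) a (e k).1 ∧
      tval val r a (e k).1 = ((e k).2 : WithTop ℚ) :=
    fun k => (hspec k).choose_spec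
  refine ⟨s', g', fun k => ⟨(hspec k).choose, rfl⟩,
    ⟨fun k => hg.1 _, ?_⟩, e, hg'lead, he_inj, he_range.trans hMskel⟩
  intro f hf a i hlt
  have ha0 : a ≠ 0 := hlt.2.1
  have hta : tval val r a i = ((vq val a - wt r i : ℚ) : WithTop ℚ) := tval_eq hval r ha0 i
  have hcL : ((i, vq val a - wt r i) : (Fin n →₀ ℕ) × ℚ) ∈ LTClassSet val r mo J :=
    ⟨a, ⟨f, hf, hlt⟩, hta⟩
  obtain ⟨m, hmM, hmi⟩ := hMdiv _ hcL
  have hmr : m ∈ Set.range e := by rw [he_range]; exact hmM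
  obtain ⟨k, hk⟩ := hmr
  obtain ⟨b, hb, htb⟩ := hg'lead k
  refine ⟨k, b, (e k).1, hb, ?_⟩
  refine le_imp_tintdiv hval ha0 hb.2.1 hta htb ?_
  rw [Prod.mk.eta, hk]
  exact hmi

end Statement11Aux
/-- every Gröbner basis of an ideal `J` of `K{X;r}` (resp. of
`K{X;r}°`) contains a subset which is a minimal Gröbner basis of `J`. -/
theorem statement11 (val : K → WithTop ℤ) (hval : IsCDVField val) (r : Fin n → ℚ)
    (mo : (Fin n →₀ ℕ) → (Fin n →₀ ℕ) → Prop) (hmo : IsMonomialOrder mo) :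
    (∀ J : Set (MvPowerSeries (Fin n) K), IsIdealOf (TateSet val r) J →
      ∀ (s : ℕ) (g : Fin s → MvPowerSeries (Fin n) K), IsGB val r mo J g →
        ∃ (s' : ℕ) (g' : Fin s' → MvPowerSeries (Fin n) K),
          (∀ k, ∃ l, g' k = g l) ∧ IsMinGB val r mo J g') ∧
    (∀ J : Set (MvPowerSeries (Fin n) K), IsIdealOf (TateIntSet val r) J →
      ∀ (s : ℕ) (g : Fin s → MvPowerSeries (Fin n) K), IsGBInt val r mo J g →
        ∃ (s' : ℕ) (g' : Fin s' → MvPowerSeries (Fin n) K),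
          (∀ k, ∃ l, g' k = g l) ∧ IsMinGBInt val r mo J g') := by
  exact ⟨fun J _ s g hg => Statement11Aux.case1 val hval r mo hmo J s g hg,
    fun J _ s g hg => Statement11Aux.case2 val hval r mo hmo J s g hg⟩
end
end

section
/- Take r = (0,…,0) and write K{X} = K{X;(0,…,0)}, val = val_0. Let J be an ideal of K{X}, set J° = J ∩ K{X}°, and let J̄° be the image of J° in the polynomial ring k̄[X_1,…,X_n] over the residue field k̄ = K°/πK° under reduction of coefficients modulo π. Let g_1,…,g_s ∈ J with val(g_i) = 0 for all i, and let ḡ_1,…,ḡ_s be their images in J̄°. Then the following are equivalent: (1) (g_1,…,g_s) is a Gröbner basis of J; (2) (g_1,…,g_s) is a Gröbner basis of J°; (3) (ḡ_1,…,ḡ_s) is a Gröbner basis of J̄° in k̄[X] with respect to the monomial order ≤ω. -/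
open MvPowerSeries

noncomputable section

variable {K : Type*} [Field K] {n : ℕ}

/-- The leading exponent of the reduction of `f` modulo `π` in `k̄[X]`:
the `mo`-largest exponent whose coefficient has valuation `0`. -/
def ResLeadExp (val : K → WithTop ℤ) (mo : (Fin n →₀ ℕ) → (Fin n →₀ ℕ) → Prop)
    (f : MvPowerSeries (Fin n) K) (i : Fin n →₀ ℕ) : Prop :=
  val (MvPowerSeries.coeff i f) = 0 ∧
    ∀ j, val (MvPowerSeries.coeff j f) = 0 → mo j i

/-- `ḡ` is a Gröbner basis of the image `J̄°` of `J°` in `k̄[X]`: the leading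
monomial of the reduction of every element of `J°` with nonzero reduction is
divisible by the leading monomial of the reduction of some `g_k`. -/
def IsGBRes (val : K → WithTop ℤ) (mo : (Fin n →₀ ℕ) → (Fin n →₀ ℕ) → Prop)
    (J₀ : Set (MvPowerSeries (Fin n) K)) {s : ℕ}
    (g : Fin s → MvPowerSeries (Fin n) K) : Prop :=
  ∀ f ∈ J₀, ∀ i₀, ResLeadExp val mo f i₀ →
    ∃ k j, ResLeadExp val mo (g k) j ∧ ∃ d, i₀ = j + d

section Aux

variable {val : K → WithTop ℤ} {mo : (Fin n →₀ ℕ) → (Fin n →₀ ℕ) → Prop}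

lemma mapQ_add (u v : WithTop ℤ) : WithTop.map (fun m:ℤ => (m:ℚ)) (u+v) =
    WithTop.map (fun m:ℤ => (m:ℚ)) u + WithTop.map (fun m:ℤ => (m:ℚ)) v := by
  cases u <;> cases v <;> simp [← WithTop.coe_add]

lemma valQ_le_iff (x y : K) : valQ val x ≤ valQ val y ↔ val x ≤ val y :=
  WithTop.map_le_iff _ (fun {a b} => Int.cast_le)

lemma valQ_lt_iff (x y : K) : valQ val x < valQ val y ↔ val x < val y := by
  rw [lt_iff_not_ge, lt_iff_not_ge, valQ_le_iff]

lemma valQ_inj {x y : K} : valQ val x = valQ val y ↔ val x = val y := by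
  rw [le_antisymm_iff, le_antisymm_iff, valQ_le_iff, valQ_le_iff]

lemma valQ_eq_top_iff (hval : IsCDVField val) {x : K} : valQ val x = ⊤ ↔ x = 0 := by
  rw [valQ, WithTop.map_eq_top_iff, hval.eq_top_iff]

lemma valQ_one (hval : IsCDVField val) : valQ val (1 : K) = 0 := by
  rw [valQ, hval.map_one, show ((0:WithTop ℤ)) = ((0:ℤ):WithTop ℤ) from rfl,
    WithTop.map_coe]
  norm_num

lemma valQ_nonneg_iff (hval : IsCDVField val) {x : K} :
    0 ≤ valQ val x ↔ 0 ≤ val x := by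
  rw [← valQ_one hval, valQ_le_iff, hval.map_one]

lemma valQ_eq_zero_iff (hval : IsCDVField val) {x : K} :
    valQ val x = 0 ↔ val x = 0 := by
  rw [← valQ_one hval, valQ_inj, hval.map_one]

lemma valQ_mul (hval : IsCDVField val) (x y : K) :
    valQ val (x * y) = valQ val x + valQ val y := by
  rw [valQ, hval.map_mul, mapQ_add]; rfl

lemma val_zero_eq_top (hval : IsCDVField val) : val (0 : K) = ⊤ :=
  (hval.eq_top_iff 0).2 rfl

lemma val_inv_eq_zero (hval : IsCDVField val) {b : K} (hb : b ≠ 0)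
    (h : val b = 0) : val b⁻¹ = 0 := by
  have h1 := hval.map_mul b b⁻¹
  rw [mul_inv_cancel₀ hb, hval.map_one, h, zero_add] at h1
  exact h1.symm

lemma tval_zero (a : K) (i : Fin n →₀ ℕ) : tval val (0 : Fin n → ℚ) a i = valQ val a := by
  simp [tval, wt]

lemma cval_zero (f : MvPowerSeries (Fin n) K) (i : Fin n →₀ ℕ) :
    cval val (0 : Fin n → ℚ) f i = valQ val (MvPowerSeries.coeff i f) := by
  rw [cval, tval_zero]

lemma termLt_zero_iff (a : K) (i : Fin n →₀ ℕ) (b : K) (j : Fin n →₀ ℕ) :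
    TermLt val (0 : Fin n → ℚ) mo a i b j ↔
      (valQ val b < valQ val a ∨ (valQ val a = valQ val b ∧ i ≠ j ∧ mo i j)) := by
  rw [TermLt, tval_zero, tval_zero]

lemma coeff_val_min_of_LT (hval : IsCDVField val) {f : MvPowerSeries (Fin n) K}
    {a : K} {i : Fin n →₀ ℕ} (h : IsLeadingTerm val (0 : Fin n → ℚ) mo f a i) :
    ∀ j, val a ≤ val (MvPowerSeries.coeff j f) := by
  intro j
  by_cases hj : MvPowerSeries.coeff j f = 0
  · rw [hj, val_zero_eq_top hval]; exact le_top
  by_cases hji : j = i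
  · rw [hji, h.1]
  rcases (termLt_zero_iff _ _ _ _).1 (h.2.2 j hj hji) with hlt | ⟨heq, _⟩
  · exact le_of_lt ((valQ_lt_iff _ _).1 hlt)
  · exact le_of_eq (valQ_inj.1 heq.symm)

lemma LT_of_ResLead (hval : IsCDVField val) {f : MvPowerSeries (Fin n) K}
    {i₀ : Fin n →₀ ℕ}
    (h0 : ∀ i, (0 : WithTop ℤ) ≤ val (MvPowerSeries.coeff i f))
    (h : ResLeadExp val mo f i₀) :
    IsLeadingTerm val (0 : Fin n → ℚ) mo f (MvPowerSeries.coeff i₀ f) i₀ := by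
  refine ⟨rfl, ?_, ?_⟩
  · intro hz
    have h1 := h.1
    rw [hz, val_zero_eq_top hval] at h1
    exact (by simp : (⊤ : WithTop ℤ) ≠ 0) h1
  · intro j hj hji
    rw [termLt_zero_iff]
    by_cases hv : val (MvPowerSeries.coeff j f) = 0
    · exact Or.inr ⟨valQ_inj.2 (hv.trans h.1.symm), hji, h.2 j hv⟩
    · refine Or.inl ((valQ_lt_iff _ _).2 ?_)
      rw [h.1]
      exact lt_of_le_of_ne (h0 j) (Ne.symm hv)

lemma ResLead_of_LT (hval : IsCDVField val) (hmo : IsMonomialOrder mo)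
    {f : MvPowerSeries (Fin n) K} {a : K} {i : Fin n →₀ ℕ}
    (h : IsLeadingTerm val (0 : Fin n → ℚ) mo f a i) (ha : val a = 0) :
    ResLeadExp val mo f i := by
  refine ⟨by rw [h.1]; exact ha, ?_⟩
  intro j hj
  have hjne : MvPowerSeries.coeff j f ≠ 0 := by
    intro hz; rw [hz, val_zero_eq_top hval] at hj; exact (by simp : (⊤ : WithTop ℤ) ≠ 0) hj
  by_cases hji : j = i
  · rw [hji]; exact hmo.refl i
  rcases (termLt_zero_iff _ _ _ _).1 (h.2.2 j hjne hji) with hlt | ⟨_, _, hmoji⟩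
  · exfalso
    have := (valQ_lt_iff _ _).1 hlt
    rw [ha, hj] at this
    exact lt_irrefl _ this
  · exact hmoji

lemma LT_scale (hval : IsCDVField val) {f : MvPowerSeries (Fin n) K} {a c : K}
    {i : Fin n →₀ ℕ} (hc : c ≠ 0)
    (h : IsLeadingTerm val (0 : Fin n → ℚ) mo f a i) :
    IsLeadingTerm val (0 : Fin n → ℚ) mo (MvPowerSeries.C c * f) (c * a) i := by
  have hct : valQ val c ≠ ⊤ := fun ht => hc ((valQ_eq_top_iff hval).1 ht)
  refine ⟨by rw [MvPowerSeries.coeff_C_mul, h.1], mul_ne_zero hc h.2.1, ?_⟩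
  intro j hj hji
  rw [MvPowerSeries.coeff_C_mul] at hj ⊢
  have hjf : MvPowerSeries.coeff j f ≠ 0 := fun hz => hj (by rw [hz, mul_zero])
  rw [termLt_zero_iff, valQ_mul hval, valQ_mul hval]
  rcases (termLt_zero_iff _ _ _ _).1 (h.2.2 j hjf hji) with hlt | ⟨heq, hne, hm⟩
  · exact Or.inl (WithTop.add_lt_add_left hct hlt)
  · exact Or.inr ⟨by rw [heq], hne, hm⟩

lemma withtop_lt_shift {q0 C' : ℚ} {x : WithTop ℚ}
    (h : ((q0 : ℚ) : WithTop ℚ) + x < ((C' : ℚ) : WithTop ℚ)) :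
    x < ((C' - q0 : ℚ) : WithTop ℚ) := by
  cases x with
  | top => simp at h
  | coe q =>
    rw [← WithTop.coe_add, WithTop.coe_lt_coe] at h
    rw [WithTop.coe_lt_coe]
    linarith

lemma C_mem_Tate (hval : IsCDVField val) (c : K) :
    IsTate val (0 : Fin n → ℚ) (MvPowerSeries.C c) := by
  intro C'
  apply Set.Finite.subset (Set.finite_singleton (0 : Fin n →₀ ℕ))
  intro i hi
  simp only [Set.mem_setOf_eq] at hi
  simp only [Set.mem_singleton_iff]
  by_contra hne
  rw [cval_zero, MvPowerSeries.coeff_C, if_neg hne] at hi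
  rw [(valQ_eq_top_iff hval).2 rfl] at hi
  exact not_top_lt hi

lemma IsTate_C_mul (hval : IsCDVField val) {f : MvPowerSeries (Fin n) K}
    (hf : IsTate val (0 : Fin n → ℚ) f) (c : K) :
    IsTate val (0 : Fin n → ℚ) (MvPowerSeries.C c * f) := by
  by_cases hc : c = 0
  · subst hc
    rw [map_zero, zero_mul]
    intro C'
    apply Set.Finite.subset (Set.finite_empty)
    intro i hi
    simp only [Set.mem_setOf_eq] at hi
    rw [cval_zero, map_zero, (valQ_eq_top_iff hval).2 rfl] at hi
    exact absurd hi not_top_lt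
  · obtain ⟨mc, hmc⟩ : ∃ mc : ℤ, val c = (mc : WithTop ℤ) := by
      rcases hv : val c with _ | mc
      · exact absurd ((hval.eq_top_iff c).1 hv) hc
      · exact ⟨mc, rfl⟩
    intro C'
    apply Set.Finite.subset (hf (C' - mc))
    intro i hi
    simp only [Set.mem_setOf_eq] at hi ⊢
    rw [cval_zero, MvPowerSeries.coeff_C_mul, valQ_mul hval] at hi
    have hvc : valQ val c = ((mc : ℚ) : WithTop ℚ) := by
      rw [valQ, hmc, WithTop.map_coe]
    rw [hvc] at hi
    rw [cval_zero]
    exact withtop_lt_shift hi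

end Aux
/-- (r = 0) for `g_1, …, g_s ∈ J` with `val(g_i) = 0`, TFAE:
(1) `G` is a GB of `J`; (2) `G` is a GB of `J° = J ∩ K{X}°`;
(3) the reductions `ḡ_i` form a GB of `J̄°` in `k̄[X]`. -/
theorem statement14 (val : K → WithTop ℤ) (hval : IsCDVField val)
    (mo : (Fin n →₀ ℕ) → (Fin n →₀ ℕ) → Prop) (hmo : IsMonomialOrder mo)
    (J : Set (MvPowerSeries (Fin n) K))
    (hJ : IsIdealOf (TateSet val (0 : Fin n → ℚ)) J)
    (s : ℕ) (g : Fin s → MvPowerSeries (Fin n) K)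
    (hgJ : ∀ k, g k ∈ J) (hg0 : ∀ k, GaussValEq val (0 : Fin n → ℚ) (g k) 0) :
    (IsGB val (0 : Fin n → ℚ) mo J g ↔
      IsGBInt val (0 : Fin n → ℚ) mo (J ∩ TateIntSet val (0 : Fin n → ℚ)) g) ∧
    (IsGBInt val (0 : Fin n → ℚ) mo (J ∩ TateIntSet val (0 : Fin n → ℚ)) g ↔
      IsGBRes val mo (J ∩ TateIntSet val (0 : Fin n → ℚ)) g) := by
  classical
  have hgval0 : ∀ k i, (0 : WithTop ℤ) ≤ val (MvPowerSeries.coeff i (g k)) := by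
    intro k i
    have h := (hg0 k).1 i
    rw [cval_zero, WithTop.coe_zero] at h
    exact (valQ_nonneg_iff hval).1 h
  have hgmem : ∀ k, g k ∈ J ∩ TateIntSet val (0 : Fin n → ℚ) := by
    intro k
    refine ⟨hgJ k, hJ.subset (hgJ k), ?_⟩
    intro i
    have h := (hg0 k).1 i
    rwa [WithTop.coe_zero] at h
  have hgne : ∀ k, g k ≠ 0 := by
    intro k hk
    obtain ⟨i, hi⟩ := (hg0 k).2
    rw [hk, cval_zero, map_zero, (valQ_eq_top_iff hval).2 rfl] at hi
    simp at hi
  have hIntCoeff : ∀ f ∈ TateIntSet val (0 : Fin n → ℚ), ∀ i,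
      (0 : WithTop ℤ) ≤ val (MvPowerSeries.coeff i f) := by
    intro f hf i
    exact (valQ_nonneg_iff hval).1 (by rw [← cval_zero]; exact hf.2 i)
  have scale : ∀ f ∈ J, ∀ a i, IsLeadingTerm val (0 : Fin n → ℚ) mo f a i →
      ∃ c : K, c ≠ 0 ∧
        (MvPowerSeries.C c * f) ∈ J ∩ TateIntSet val (0 : Fin n → ℚ) ∧
        IsLeadingTerm val (0 : Fin n → ℚ) mo (MvPowerSeries.C c * f) (c * a) i ∧
        val (c * a) = 0 := by
    intro f hf a i h
    obtain ⟨m, hm⟩ : ∃ m : ℤ, val a = (m : WithTop ℤ) := by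
      rcases hv : val a with _ | m
      · exact absurd ((hval.eq_top_iff a).1 hv) h.2.1
      · exact ⟨m, rfl⟩
    obtain ⟨c, hc⟩ := hval.surjective (-m)
    have hcne : c ≠ 0 := by
      intro h0
      rw [h0, val_zero_eq_top hval] at hc
      exact WithTop.top_ne_coe hc
    have hca : val (c * a) = 0 := by
      rw [hval.map_mul, hc, hm, ← WithTop.coe_add]
      norm_num
    have hcoeff : ∀ j, (0 : WithTop ℤ) ≤
        val (MvPowerSeries.coeff j (MvPowerSeries.C c * f)) := by
      intro j
      rw [MvPowerSeries.coeff_C_mul, hval.map_mul, hc]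
      have h1 := coeff_val_min_of_LT hval h j
      rw [hm] at h1
      calc (0 : WithTop ℤ) = ((-m : ℤ) : WithTop ℤ) + (m : WithTop ℤ) := by
            rw [← WithTop.coe_add]; norm_num
        _ ≤ _ := add_le_add_right h1 _
    refine ⟨c, hcne,
      ⟨hJ.smul_mem _ (C_mem_Tate hval c) f hf,
        IsTate_C_mul hval (hJ.subset hf) c, ?_⟩,
      LT_scale hval hcne h, hca⟩
    intro j
    rw [cval_zero]
    exact (valQ_nonneg_iff hval).2 (hcoeff j)
  have h12 : IsGB val (0 : Fin n → ℚ) mo J g →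
      IsGBInt val (0 : Fin n → ℚ) mo (J ∩ TateIntSet val (0 : Fin n → ℚ)) g := by
    intro hGB
    refine ⟨fun k => ⟨hgmem k, hgne k⟩, ?_⟩
    intro f hf a i hlt
    obtain ⟨k, b, j, hltg, hdiv⟩ := hGB.2 f hf.1 a i hlt
    obtain ⟨d, hd⟩ := hdiv.2.2
    refine ⟨k, b, j, hltg, hdiv.1, hdiv.2.1, d, hd, ?_⟩
    rw [tval_zero, valQ_mul hval]
    have hb0 : val b = 0 := by
      have h1 : val b ≤ 0 := by
        obtain ⟨i', hi'⟩ := (hg0 k).2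
        have h2 := coeff_val_min_of_LT hval hltg i'
        rw [cval_zero] at hi'
        have h3 : val (MvPowerSeries.coeff i' (g k)) = 0 := by
          rw [← valQ_eq_zero_iff hval, hi', WithTop.coe_zero]
        exact h3 ▸ h2
      exact le_antisymm h1 (by rw [← hltg.1]; exact hgval0 k j)
    have ha0 : 0 ≤ valQ val a := by
      have h4 := hf.2.2 i
      rwa [cval_zero, hlt.1] at h4
    rw [(valQ_eq_zero_iff hval).2 (val_inv_eq_zero hval hdiv.1 hb0), add_zero]
    exact ha0
  have h21 : IsGBInt val (0 : Fin n → ℚ) mo (J ∩ TateIntSet val (0 : Fin n → ℚ)) g →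
      IsGB val (0 : Fin n → ℚ) mo J g := by
    intro hGB
    refine ⟨fun k => ⟨hgJ k, hgne k⟩, ?_⟩
    intro f hf a i hlt
    obtain ⟨c, hcne, hcfmem, hcflt, hca⟩ := scale f hf a i hlt
    obtain ⟨k, b, j, hltg, hdiv⟩ := hGB.2 _ hcfmem (c * a) i hcflt
    obtain ⟨d, hd, _⟩ := hdiv.2.2
    exact ⟨k, b, j, hltg, hdiv.1, hlt.2.1, d, hd⟩
  have h23 : IsGBInt val (0 : Fin n → ℚ) mo (J ∩ TateIntSet val (0 : Fin n → ℚ)) g →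
      IsGBRes val mo (J ∩ TateIntSet val (0 : Fin n → ℚ)) g := by
    intro hGB f hf i₀ hres
    have h0 := hIntCoeff f hf.2
    have hlt := LT_of_ResLead hval h0 hres
    obtain ⟨k, b, j, hltg, hdiv⟩ := hGB.2 f hf (MvPowerSeries.coeff i₀ f) i₀ hlt
    obtain ⟨d, hd, hpos⟩ := hdiv.2.2
    have hbge : (0 : WithTop ℤ) ≤ val b := by rw [← hltg.1]; exact hgval0 k j
    have hble : val b ≤ 0 := by
      rw [tval_zero, valQ_mul hval, (valQ_eq_zero_iff hval).2 hres.1, zero_add] at hpos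
      have hbinv : (0 : WithTop ℤ) ≤ val b⁻¹ := (valQ_nonneg_iff hval).1 hpos
      have h5 := hval.map_mul b b⁻¹
      rw [mul_inv_cancel₀ hdiv.1, hval.map_one] at h5
      calc val b ≤ val b + val b⁻¹ := le_add_of_nonneg_right hbinv
        _ = 0 := h5.symm
    exact ⟨k, j, ResLead_of_LT hval hmo hltg (le_antisymm hble hbge), d, hd⟩
  have h32 : IsGBRes val mo (J ∩ TateIntSet val (0 : Fin n → ℚ)) g →
      IsGBInt val (0 : Fin n → ℚ) mo (J ∩ TateIntSet val (0 : Fin n → ℚ)) g := by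
    intro hRes
    refine ⟨fun k => ⟨hgmem k, hgne k⟩, ?_⟩
    intro f hf a i hlt
    obtain ⟨c, hcne, hcfmem, hcflt, hca⟩ := scale f hf.1 a i hlt
    have hres := ResLead_of_LT hval hmo hcflt hca
    obtain ⟨k, j, hresg, d, hd⟩ := hRes _ hcfmem i hres
    have hltg := LT_of_ResLead hval (hgval0 k) hresg
    refine ⟨k, _, j, hltg, hltg.2.1, hlt.2.1, d, hd, ?_⟩
    rw [tval_zero, valQ_mul hval,
      (valQ_eq_zero_iff hval).2 (val_inv_eq_zero hval hltg.2.1 hresg.1), add_zero]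
    have h6 := hf.2.2 i
    rwa [cval_zero, hlt.1] at h6
  exact ⟨⟨h12, h21⟩, ⟨h23, h32⟩⟩
end
end

section
/- Let J be an ideal of K{X;r} (resp. of K{X;r}°) and let (g_1,…,g_s) be a Gröbner basis of J. Let f ∈ K{X;r} (resp. f ∈ K{X;r}°) and suppose f = q_1 g_1 + ⋯ + q_s g_s + ρ is a decomposition such that no nonzero term of ρ is divisible by any LT(g_i) in T(r) (resp. in T°(r)), and every nonzero term t of each q_i satisfies t·LT(g_i) ≤ LT(f). Then ρ = 0 if and only if f ∈ J. -/
open MvPowerSeries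

noncomputable section

variable {K : Type*} [Field K] {n : ℕ}

lemma cval_eq_top_iff' (val : K → WithTop ℤ) (hval : IsCDVField val) (r : Fin n → ℚ)
    (f : MvPowerSeries (Fin n) K) (i : Fin n →₀ ℕ) :
    cval val r f i = ⊤ ↔ MvPowerSeries.coeff i f = 0 := by
  unfold cval tval valQ
  rw [WithTop.add_eq_top]
  simp [hval.eq_top_iff]

lemma exists_rel_max {α : Type*} (mo : α → α → Prop)
    (htr : ∀ i j k, mo i j → mo j k → mo i k) (hto : ∀ i j, mo i j ∨ mo j i)
    (F : Finset α) (hF : F.Nonempty) : ∃ i ∈ F, ∀ j ∈ F, mo j i := by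
  classical
  induction F using Finset.induction_on with
  | empty => exact absurd hF (by simp)
  | @insert a F ha ih =>
    by_cases hFe : F.Nonempty
    · obtain ⟨i, hiF, hi⟩ := ih hFe
      rcases hto a i with h | h
      · exact ⟨i, Finset.mem_insert_of_mem hiF, fun j hj => by
          rcases Finset.mem_insert.1 hj with rfl | hj
          · exact h
          · exact hi j hj⟩
      · exact ⟨a, Finset.mem_insert_self a F, fun j hj => by
          rcases Finset.mem_insert.1 hj with rfl | hj
          · rcases hto j j with h' | h' <;> exact h'
          · exact htr j i a (hi j hj) h⟩
    · refine ⟨a, Finset.mem_insert_self a F, fun j hj => ?_⟩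
      rcases Finset.mem_insert.1 hj with rfl | hj
      · rcases hto j j with h' | h' <;> exact h'
      · exact absurd ⟨j, hj⟩ hFe

lemma exists_leadTerm (val : K → WithTop ℤ) (hval : IsCDVField val) (r : Fin n → ℚ)
    (mo : (Fin n →₀ ℕ) → (Fin n →₀ ℕ) → Prop) (hmo : IsMonomialOrder mo)
    (f : MvPowerSeries (Fin n) K) (hf : IsTate val r f) (hne : f ≠ 0) :
    ∃ a i, IsLeadingTerm val r mo f a i := by
  classical
  have hex : ∃ i₀, MvPowerSeries.coeff i₀ f ≠ 0 := by
    by_contra h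
    push_neg at h
    exact hne (MvPowerSeries.ext fun i => by simp [h i])
  obtain ⟨i₀, hi₀⟩ := hex
  have hnt : cval val r f i₀ ≠ ⊤ := fun h => hi₀ ((cval_eq_top_iff' val hval r f i₀).1 h)
  obtain ⟨c, hc⟩ := WithTop.ne_top_iff_exists.1 hnt
  set T := {i : Fin n →₀ ℕ | cval val r f i < ((c + 1 : ℚ) : WithTop ℚ)} with hT
  have hTfin : T.Finite := hf (c + 1)
  set F := hTfin.toFinset with hF
  have hmemF : ∀ i, i ∈ F ↔ cval val r f i < ((c + 1 : ℚ) : WithTop ℚ) := by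
    intro i; rw [hF, Set.Finite.mem_toFinset]; rfl
  have hi₀F : i₀ ∈ F := by
    rw [hmemF, ← hc]
    exact_mod_cast (by linarith : c < c + 1)
  obtain ⟨i, hiF, hi⟩ := F.exists_min_image (cval val r f) ⟨i₀, hi₀F⟩
  set m := cval val r f i with hm
  have hmin : ∀ j, m ≤ cval val r f j := by
    intro j
    by_cases hj : j ∈ F
    · exact hi j hj
    · have h1 : ¬ cval val r f j < ((c + 1 : ℚ) : WithTop ℚ) := fun h => hj ((hmemF j).2 h)
      push_neg at h1
      have h2 : m ≤ cval val r f i₀ := hi i₀ hi₀F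
      refine le_trans (le_trans h2 ?_) h1
      rw [← hc]
      exact_mod_cast (by linarith : c ≤ c + 1)
  set F' := F.filter (fun j => cval val r f j = m) with hF'
  have hiF' : i ∈ F' := by rw [hF', Finset.mem_filter]; exact ⟨hiF, rfl⟩
  obtain ⟨i₁, hi₁F', hi₁⟩ := exists_rel_max mo hmo.trans hmo.total F' ⟨i, hiF'⟩
  have hi₁m : cval val r f i₁ = m := (Finset.mem_filter.1 hi₁F').2
  have hi₁F : i₁ ∈ F := (Finset.mem_filter.1 hi₁F').1
  have hi₁ne : MvPowerSeries.coeff i₁ f ≠ 0 := by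
    intro h
    have h2 := (cval_eq_top_iff' val hval r f i₁).2 h
    exact ((hmemF i₁).1 hi₁F).ne_top h2
  refine ⟨MvPowerSeries.coeff i₁ f, i₁, rfl, hi₁ne, fun j hj hji => ?_⟩
  have htv : ∀ k, tval val r (MvPowerSeries.coeff k f) k = cval val r f k := fun _ => rfl
  rcases lt_or_eq_of_le (hmin j) with h | h
  · left
    rw [htv, htv, hi₁m]
    exact h
  · right
    have hjF : j ∈ F := by
      rw [hmemF, ← h, hm]
      calc m ≤ cval val r f i₀ := hi i₀ hi₀F
        _ < ((c + 1 : ℚ) : WithTop ℚ) := by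
          rw [← hc]; exact_mod_cast (by linarith : c < c + 1)
    have hjF' : j ∈ F' := by rw [hF', Finset.mem_filter]; exact ⟨hjF, h.symm⟩
    exact ⟨by rw [htv, htv, hi₁m, ← h], hji, hi₁ j hjF'⟩

/-- if `(g_1, …, g_s)` is a Gröbner basis of `J` and
`f = q_1·g_1 + ⋯ + q_s·g_s + ρ` is a division satisfying the conditions of the
division proposition, then `ρ = 0` iff `f ∈ J`. -/
theorem statement16 (val : K → WithTop ℤ) (hval : IsCDVField val) (r : Fin n → ℚ)
    (mo : (Fin n →₀ ℕ) → (Fin n →₀ ℕ) → Prop) (hmo : IsMonomialOrder mo) :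
    (∀ J : Set (MvPowerSeries (Fin n) K), IsIdealOf (TateSet val r) J →
      ∀ (s : ℕ) (g : Fin s → MvPowerSeries (Fin n) K), IsGB val r mo J g →
      ∀ f, IsTate val r f →
      ∀ (q : Fin s → MvPowerSeries (Fin n) K) (ρ : MvPowerSeries (Fin n) K),
        (∀ k, q k ∈ TateSet val r) → IsTate val r ρ →
        f = (∑ k, q k * g k) + ρ →
        (∀ k i, MvPowerSeries.coeff i ρ ≠ 0 →
          ∀ b j, IsLeadingTerm val r mo (g k) b j →
            ¬ TDiv b j (MvPowerSeries.coeff i ρ) i) →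
        (∀ k i, MvPowerSeries.coeff i (q k) ≠ 0 →
          ∀ b j, IsLeadingTerm val r mo (g k) b j →
          ∀ a₀ i₀, IsLeadingTerm val r mo f a₀ i₀ →
            TermLe val r mo (MvPowerSeries.coeff i (q k) * b) (i + j) a₀ i₀) →
        (ρ = 0 ↔ f ∈ J)) ∧
    (∀ J : Set (MvPowerSeries (Fin n) K), IsIdealOf (TateIntSet val r) J →
      ∀ (s : ℕ) (g : Fin s → MvPowerSeries (Fin n) K), IsGBInt val r mo J g →
      ∀ f, f ∈ TateIntSet val r →
      ∀ (q : Fin s → MvPowerSeries (Fin n) K) (ρ : MvPowerSeries (Fin n) K),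
        (∀ k, q k ∈ TateIntSet val r) → IsTate val r ρ →
        f = (∑ k, q k * g k) + ρ →
        (∀ k i, MvPowerSeries.coeff i ρ ≠ 0 →
          ∀ b j, IsLeadingTerm val r mo (g k) b j →
            ¬ TIntDiv val r b j (MvPowerSeries.coeff i ρ) i) →
        (∀ k i, MvPowerSeries.coeff i (q k) ≠ 0 →
          ∀ b j, IsLeadingTerm val r mo (g k) b j →
          ∀ a₀ i₀, IsLeadingTerm val r mo f a₀ i₀ →
            TermLe val r mo (MvPowerSeries.coeff i (q k) * b) (i + j) a₀ i₀) →
        (ρ = 0 ↔ f ∈ J)) := by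
  classical
  have key : ∀ (A J : Set (MvPowerSeries (Fin n) K)), IsIdealOf A J →
      ∀ (s : ℕ) (g : Fin s → MvPowerSeries (Fin n) K), (∀ k, g k ∈ J) →
      ∀ (f : MvPowerSeries (Fin n) K) (q : Fin s → MvPowerSeries (Fin n) K)
        (ρ : MvPowerSeries (Fin n) K),
        (∀ k, q k ∈ A) → f = (∑ k, q k * g k) + ρ →
        ((ρ = 0 → f ∈ J) ∧ (f ∈ J → ρ ∈ J)) := by
    intro A J hJ s g hg f q ρ hq hfeq
    have hsum : (∑ k, q k * g k) ∈ J := by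
      refine Finset.sum_induction _ (· ∈ J) (fun a b ha hb => hJ.add_mem a ha b hb)
        hJ.zero_mem (fun k _ => hJ.smul_mem (q k) (hq k) (g k) (hg k))
    constructor
    · intro hρ
      rw [hfeq, hρ, add_zero]
      exact hsum
    · intro hfJ
      have hr : ρ = f + -(∑ k, q k * g k) := by rw [hfeq]; ring
      rw [hr]
      exact hJ.add_mem f hfJ _ (hJ.neg_mem _ hsum)
  constructor
  · intro J hJ s g hGB f hf q ρ hq hρT hfeq hdiv _
    obtain ⟨h1, h2⟩ := key (TateSet val r) J hJ s g (fun k => (hGB.1 k).1) f q ρ hq hfeq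
    refine ⟨h1, fun hfJ => ?_⟩
    by_contra hρ
    obtain ⟨a, i, hlt⟩ := exists_leadTerm val hval r mo hmo ρ hρT hρ
    obtain ⟨k, b, j, hltg, hd⟩ := hGB.2 ρ (h2 hfJ) a i hlt
    have hco : MvPowerSeries.coeff i ρ ≠ 0 := by rw [hlt.1]; exact hlt.2.1
    exact hdiv k i hco b j hltg (by rw [hlt.1]; exact hd)
  · intro J hJ s g hGB f hf q ρ hq hρT hfeq hdiv _
    obtain ⟨h1, h2⟩ := key (TateIntSet val r) J hJ s g (fun k => (hGB.1 k).1) f q ρ hq hfeq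
    refine ⟨h1, fun hfJ => ?_⟩
    by_contra hρ
    obtain ⟨a, i, hlt⟩ := exists_leadTerm val hval r mo hmo ρ hρT hρ
    obtain ⟨k, b, j, hltg, hd⟩ := hGB.2 ρ (h2 hfJ) a i hlt
    have hco : MvPowerSeries.coeff i ρ ≠ 0 := by rw [hlt.1]; exact hlt.2.1
    exact hdiv k i hco b j hltg (by rw [hlt.1]; exact hd)
end
end
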